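/- arXiv:2009.08038 — 2 statements merged into one kernel-verified Lean document; each statement's English description precedes it below -/
import Mathlib

section
/- Let ψ ∈ (0, π), D^h > 0, l(φ) = D^h/(cos φ − sin φ cot ψ), and let 0 < φ_l < ψ and ψ + π < φ_u < 2π. Then ∫_0^{φ_l} l(φ)²/2 dφ + ∫_{φ_u}^{2π} l(φ)²/2 dφ = (1/2) sin(φ_l − φ_u) · l(φ_l) · l(φ_u). -/
open Real intervalIntegral

/-- ∫₀^{φ_l} l²/2 + ∫_{φ_u}^{2π} l²/2 = (1/2) sin(φ_l−φ_u) l(φ_l) l(φ_u),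
where l(φ) = D^h/(cosφ − sinφ·cotψ). -/
theorem stmt4 (ψ Dh φl φu : ℝ) (hψ : ψ ∈ Set.Ioo 0 π) (hDh : 0 < Dh)
    (hφl : 0 < φl) (hφlψ : φl < ψ) (hφu : ψ + π < φu) (hφu2 : φu < 2 * π)
    (l : ℝ → ℝ) (hl : ∀ φ, l φ = Dh / (Real.cos φ - Real.sin φ * Real.cot ψ))
    (hpos1 : ∀ φ ∈ Set.Icc 0 φl, 0 < Real.cos φ - Real.sin φ * Real.cot ψ)
    (hpos2 : ∀ φ ∈ Set.Icc φu (2 * π), 0 < Real.cos φ - Real.sin φ * Real.cot ψ) :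
    (∫ φ in (0 : ℝ)..φl, l φ ^ 2 / 2) + (∫ φ in φu..(2 * π), l φ ^ 2 / 2)
      = 1 / 2 * Real.sin (φl - φu) * l φl * l φu := by
  set c := Real.cot ψ with hc
  set g : ℝ → ℝ := fun φ => Real.cos φ - Real.sin φ * c with hg
  set F : ℝ → ℝ := fun φ => Dh ^ 2 / 2 * (Real.sin φ / g φ) with hF
  have hgcont : Continuous g := by
    exact Real.continuous_cos.sub (Real.continuous_sin.mul continuous_const)
  have key : ∀ φ : ℝ, g φ ≠ 0 → HasDerivAt F (l φ ^ 2 / 2) φ := by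
    intro φ hne
    have hsin := Real.hasDerivAt_sin φ
    have hgd : HasDerivAt g (-Real.sin φ - Real.cos φ * c) φ := by
      exact (Real.hasDerivAt_cos φ).sub ((Real.hasDerivAt_sin φ).mul_const c)
    have hdiv := hsin.div hgd hne
    have hmul := hdiv.const_mul (Dh ^ 2 / 2)
    have hnum : Real.cos φ * g φ - Real.sin φ * (-Real.sin φ - Real.cos φ * c) = 1 := by
      have hpy := Real.sin_sq_add_cos_sq φ
      simp only [hg]
      linear_combination hpy
    rw [hnum] at hmul
    refine hmul.congr_deriv ?_
    rw [hl, show Real.cos φ - Real.sin φ * c = g φ from rfl]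
    field_simp
  have hne1 : ∀ φ ∈ Set.Icc (0:ℝ) φl, g φ ≠ 0 := fun φ hφ => ne_of_gt (hpos1 φ hφ)
  have hne2 : ∀ φ ∈ Set.Icc φu (2*π), g φ ≠ 0 := fun φ hφ => ne_of_gt (hpos2 φ hφ)
  have huIcc1 : Set.uIcc (0:ℝ) φl = Set.Icc 0 φl := Set.uIcc_of_le hφl.le
  have huIcc2 : Set.uIcc φu (2*π) = Set.Icc φu (2*π) := Set.uIcc_of_le hφu2.le
  have hcontOn1 : ContinuousOn (fun φ => l φ ^ 2 / 2) (Set.uIcc 0 φl) := by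
    rw [huIcc1]
    have : ContinuousOn (fun φ => Dh / g φ) (Set.Icc 0 φl) :=
      continuousOn_const.div hgcont.continuousOn hne1
    have h2 : ContinuousOn (fun φ => (Dh / g φ) ^ 2 / 2) (Set.Icc 0 φl) :=
      (this.pow 2).div_const 2
    refine h2.congr fun φ hφ => ?_
    simp [hl, hg]
  have hcontOn2 : ContinuousOn (fun φ => l φ ^ 2 / 2) (Set.uIcc φu (2*π)) := by
    rw [huIcc2]
    have : ContinuousOn (fun φ => Dh / g φ) (Set.Icc φu (2*π)) :=
      continuousOn_const.div hgcont.continuousOn hne2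
    have h2 : ContinuousOn (fun φ => (Dh / g φ) ^ 2 / 2) (Set.Icc φu (2*π)) :=
      (this.pow 2).div_const 2
    refine h2.congr fun φ hφ => ?_
    simp [hl, hg]
  have h1 : (∫ φ in (0:ℝ)..φl, l φ ^ 2 / 2) = F φl - F 0 := by
    refine integral_eq_sub_of_hasDerivAt (fun φ hφ => key φ ?_) hcontOn1.intervalIntegrable
    exact hne1 φ (huIcc1 ▸ hφ)
  have h2 : (∫ φ in φu..(2*π), l φ ^ 2 / 2) = F (2*π) - F φu := by
    refine integral_eq_sub_of_hasDerivAt (fun φ hφ => key φ ?_) hcontOn2.intervalIntegrable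
    exact hne2 φ (huIcc2 ▸ hφ)
  rw [h1, h2]
  have hF0 : F 0 = 0 := by simp [hF]
  have hF2π : F (2*π) = 0 := by simp [hF]
  rw [hF0, hF2π]
  have hgl : g φl ≠ 0 := hne1 φl ⟨hφl.le, le_refl _⟩
  have hgu : g φu ≠ 0 := hne2 φu ⟨le_refl _, hφu2.le⟩
  rw [hl, hl, Real.sin_sub]
  show Dh ^ 2 / 2 * (Real.sin φl / g φl) - 0 + (0 - Dh ^ 2 / 2 * (Real.sin φu / g φu)) = _
  have e : Real.sin φl * g φu - Real.sin φu * g φl = Real.sin φl * Real.cos φu - Real.cos φl * Real.sin φu := by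
    simp only [hg]; ring
  rw [show Real.cos φl - Real.sin φl * c = g φl from rfl, show Real.cos φu - Real.sin φu * c = g φu from rfl, ← e]
  field_simp
  ring
end

section
/- Let c : [0, 2π) → ℝ_{≥0} be defined by c(φ) = l(φ) for φ ∈ [0, φ_l) ∪ (φ_u, 2π) and c(φ) = d_th(φ) for φ ∈ [φ_l, φ_u], where 0 ≤ φ_l < φ_u < 2π, d_th is continuous, and d_th(φ_l) = l(φ_l), d_th(φ_u) = l(φ_u), with l(φ) = D^h/(cos φ − sin φ cot ψ). Then the polar area ∫_0^{2π} c(φ)²/2 dφ equals ∫_{φ_l}^{φ_u} d_th(φ)²/2 dφ + (1/2) sin(φ_l − φ_u) l(φ_l) l(φ_u). -/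
open Real intervalIntegral

/-- Theorem 2 of the paper: the polar area of the coverage region
with effective radius c (equal to l off [φ_l,φ_u] and to d_th on [φ_l,φ_u]) equals
∫_{φ_l}^{φ_u} d_th²/2 + (1/2) sin(φ_l−φ_u) l(φ_l) l(φ_u). -/
theorem stmt9 (ψ Dh φl φu : ℝ) (hψ : ψ ∈ Set.Ioo 0 π) (hDh : 0 < Dh)
    (hφl : 0 < φl) (hφlψ : φl < ψ) (hφu : ψ + π < φu) (hφu2 : φu < 2 * π)
    (l : ℝ → ℝ) (hldef : ∀ φ, l φ = Dh / (Real.cos φ - Real.sin φ * Real.cot ψ))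
    (hpos1 : ∀ φ ∈ Set.Icc 0 φl, 0 < Real.cos φ - Real.sin φ * Real.cot ψ)
    (hpos2 : ∀ φ ∈ Set.Icc φu (2 * π), 0 < Real.cos φ - Real.sin φ * Real.cot ψ)
    (dth : ℝ → ℝ) (hdnn : ∀ φ, 0 ≤ dth φ)
    (hdcont : ContinuousOn dth (Set.Icc φl φu))
    (hmatchl : dth φl = l φl) (hmatchu : dth φu = l φu)
    (c : ℝ → ℝ)
    (hc1 : ∀ φ ∈ Set.Ico 0 φl ∪ Set.Ioo φu (2 * π), c φ = l φ)
    (hc2 : ∀ φ ∈ Set.Icc φl φu, c φ = dth φ) :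
    (∫ φ in (0 : ℝ)..(2 * π), c φ ^ 2 / 2)
      = (∫ φ in φl..φu, dth φ ^ 2 / 2)
        + 1 / 2 * Real.sin (φl - φu) * l φl * l φu := by
  obtain ⟨hψ0, hψπ⟩ := hψ
  have hsψ : 0 < Real.sin ψ := Real.sin_pos_of_pos_of_lt_pi hψ0 hψπ
  have hlu : φl ≤ φu := le_of_lt (lt_trans hφlψ (lt_trans (by linarith [Real.pi_pos]) hφu))
  have hu2 : φu ≤ 2 * π := le_of_lt hφu2
  -- rewrite the denominator
  have hden : ∀ x, Real.cos x - Real.sin x * Real.cot ψ = Real.sin (ψ - x) / Real.sin ψ := by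
    intro x
    rw [Real.cot_eq_cos_div_sin, Real.sin_sub]
    field_simp
  have hsin1 : ∀ x ∈ Set.Icc 0 φl, 0 < Real.sin (ψ - x) := by
    intro x hx
    have h := hpos1 x hx
    rw [hden] at h
    have := mul_pos h hsψ
    rwa [div_mul_cancel₀ _ hsψ.ne'] at this
  have hsin2 : ∀ x ∈ Set.Icc φu (2 * π), 0 < Real.sin (ψ - x) := by
    intro x hx
    have h := hpos2 x hx
    rw [hden] at h
    have := mul_pos h hsψ
    rwa [div_mul_cancel₀ _ hsψ.ne'] at this
  have hlval : ∀ x, Real.sin (ψ - x) ≠ 0 →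
      l x = Dh * Real.sin ψ / Real.sin (ψ - x) := by
    intro x hx
    rw [hldef, hden, div_div_eq_mul_div]
  set K : ℝ := (Dh * Real.sin ψ) ^ 2 / 2 with hK
  set F : ℝ → ℝ := fun φ => K * (Real.cos (ψ - φ) / Real.sin (ψ - φ)) with hF
  -- derivative of F
  have hFderiv : ∀ x, Real.sin (ψ - x) ≠ 0 → HasDerivAt F (l x ^ 2 / 2) x := by
    intro x hx
    have hu : HasDerivAt (fun φ : ℝ => ψ - φ) (-1) x := by
      simpa using (hasDerivAt_id x).const_sub ψ
    have hcos : HasDerivAt (fun φ : ℝ => Real.cos (ψ - φ))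
        (-Real.sin (ψ - x) * (-1)) x :=
      (Real.hasDerivAt_cos (ψ - x)).comp x hu
    have hsin : HasDerivAt (fun φ : ℝ => Real.sin (ψ - φ))
        (Real.cos (ψ - x) * (-1)) x :=
      (Real.hasDerivAt_sin (ψ - x)).comp x hu
    have hdiv := (hcos.div hsin hx).const_mul K
    refine HasDerivAt.congr_deriv (f := F) hdiv ?_
    symm
    rw [hlval x hx, hK]
    have hpy : Real.sin (ψ - x) ^ 2 + Real.cos (ψ - x) ^ 2 = 1 :=
      Real.sin_sq_add_cos_sq _
    field_simp
    linear_combination (-1 : ℝ) * hpy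
  -- explicit form of l² / 2
  have hl2 : ∀ x, Real.sin (ψ - x) ≠ 0 →
      l x ^ 2 / 2 = (Dh / (Real.cos x - Real.sin x * Real.cot ψ)) ^ 2 / 2 := by
    intro x _; rw [hldef]
  -- continuity of l²/2 on the two side intervals
  have hcont : ∀ s : Set ℝ, (∀ x ∈ s, 0 < Real.cos x - Real.sin x * Real.cot ψ) →
      ContinuousOn (fun φ => l φ ^ 2 / 2) s := by
    intro s hs
    have : ContinuousOn (fun φ => (Dh / (Real.cos φ - Real.sin φ * Real.cot ψ)) ^ 2 / 2) s := by
      apply ContinuousOn.div_const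
      apply ContinuousOn.pow
      exact continuousOn_const.div
        ((Real.continuous_cos.sub (Real.continuous_sin.mul continuous_const)).continuousOn)
        (fun x hx => (hs x hx).ne')
    exact this.congr (fun x _ => by rw [hldef])
  have hcont1 : ContinuousOn (fun φ => l φ ^ 2 / 2) (Set.Icc 0 φl) := hcont _ hpos1
  have hcont2 : ContinuousOn (fun φ => l φ ^ 2 / 2) (Set.Icc φu (2 * π)) := hcont _ hpos2
  -- c = l on [0, φl]
  have hceq1 : Set.EqOn (fun φ => c φ ^ 2 / 2) (fun φ => l φ ^ 2 / 2) (Set.Icc 0 φl) := by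
    intro x hx
    rcases eq_or_lt_of_le hx.2 with h | h
    · simp only [h, hc2 φl ⟨le_refl _, hlu⟩, hmatchl]
    · simp only [hc1 x (Or.inl ⟨hx.1, h⟩)]
  have hceq2 : Set.EqOn (fun φ => c φ ^ 2 / 2) (fun φ => dth φ ^ 2 / 2) (Set.Icc φl φu) := by
    intro x hx; simp only [hc2 x hx]
  -- a.e. equality c = l on (φu, 2π]
  have h2pi_ne : ∀ᵐ x : ℝ, x ≠ 2 * π := by
    have : (MeasureTheory.volume : MeasureTheory.Measure ℝ) {2 * π} = 0 :=
      MeasureTheory.measure_singleton _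
    rw [MeasureTheory.ae_iff]
    simpa using this
  have hceq3 : (fun φ => c φ ^ 2 / 2)
      =ᵐ[MeasureTheory.volume.restrict (Set.Ioc φu (2 * π))] (fun φ => l φ ^ 2 / 2) := by
    filter_upwards [MeasureTheory.ae_restrict_mem measurableSet_Ioc,
      MeasureTheory.ae_restrict_of_ae h2pi_ne] with x hx hx2
    rw [hc1 x (Or.inr ⟨hx.1, lt_of_le_of_ne hx.2 hx2⟩)]
  -- integrability of the three pieces
  have hil : IntervalIntegrable (fun φ => l φ ^ 2 / 2) MeasureTheory.volume 0 φl :=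
    hcont1.intervalIntegrable_of_Icc hφl.le
  have hil2 : IntervalIntegrable (fun φ => l φ ^ 2 / 2) MeasureTheory.volume φu (2 * π) :=
    hcont2.intervalIntegrable_of_Icc hu2
  have hid : IntervalIntegrable (fun φ => dth φ ^ 2 / 2) MeasureTheory.volume φl φu :=
    (((hdcont.pow 2).div_const 2)).intervalIntegrable_of_Icc hlu
  have hic1 : IntervalIntegrable (fun φ => c φ ^ 2 / 2) MeasureTheory.volume 0 φl := by
    rw [intervalIntegrable_iff_integrableOn_Ioc_of_le hφl.le]
    exact (hil.1.congr_fun (fun x hx => (hceq1 ⟨hx.1.le, hx.2⟩).symm) measurableSet_Ioc)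
  have hic2 : IntervalIntegrable (fun φ => c φ ^ 2 / 2) MeasureTheory.volume φl φu := by
    rw [intervalIntegrable_iff_integrableOn_Ioc_of_le hlu]
    exact ((hid.1).congr_fun (fun x hx => (hceq2 ⟨hx.1.le, hx.2⟩).symm) measurableSet_Ioc)
  have hic3 : IntervalIntegrable (fun φ => c φ ^ 2 / 2) MeasureTheory.volume φu (2 * π) := by
    rw [intervalIntegrable_iff_integrableOn_Ioc_of_le hu2]
    exact hil2.1.congr_fun_ae hceq3.symm
  -- split the integral
  have hsplit : (∫ φ in (0 : ℝ)..(2 * π), c φ ^ 2 / 2)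
      = (∫ φ in (0 : ℝ)..φl, c φ ^ 2 / 2) + (∫ φ in φl..φu, c φ ^ 2 / 2)
        + (∫ φ in φu..(2 * π), c φ ^ 2 / 2) := by
    rw [integral_add_adjacent_intervals hic1 hic2,
      integral_add_adjacent_intervals (hic1.trans hic2) hic3]
  -- evaluate side integrals via FTC
  have hsne1 : ∀ x ∈ Set.uIcc (0 : ℝ) φl, Real.sin (ψ - x) ≠ 0 := by
    intro x hx
    rw [Set.uIcc_of_le hφl.le] at hx
    exact (hsin1 x hx).ne'
  have hsne2 : ∀ x ∈ Set.uIcc φu (2 * π), Real.sin (ψ - x) ≠ 0 := by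
    intro x hx
    rw [Set.uIcc_of_le hu2] at hx
    exact (hsin2 x hx).ne'
  have hI1 : (∫ φ in (0 : ℝ)..φl, l φ ^ 2 / 2) = F φl - F 0 :=
    integral_eq_sub_of_hasDerivAt (fun x hx => hFderiv x (hsne1 x hx)) hil
  have hI3 : (∫ φ in φu..(2 * π), l φ ^ 2 / 2) = F (2 * π) - F φu :=
    integral_eq_sub_of_hasDerivAt (fun x hx => hFderiv x (hsne2 x hx)) hil2
  -- rewrite the three pieces
  have e1 : (∫ φ in (0 : ℝ)..φl, c φ ^ 2 / 2) = ∫ φ in (0 : ℝ)..φl, l φ ^ 2 / 2 :=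
    integral_congr (by rwa [Set.uIcc_of_le hφl.le])
  have e2 : (∫ φ in φl..φu, c φ ^ 2 / 2) = ∫ φ in φl..φu, dth φ ^ 2 / 2 :=
    integral_congr (by rwa [Set.uIcc_of_le hlu])
  have e3 : (∫ φ in φu..(2 * π), c φ ^ 2 / 2) = ∫ φ in φu..(2 * π), l φ ^ 2 / 2 := by
    apply integral_congr_ae
    filter_upwards [h2pi_ne] with x hx2 hmem
    rw [Set.uIoc_of_le hu2] at hmem
    rw [hc1 x (Or.inr ⟨hmem.1, lt_of_le_of_ne hmem.2 hx2⟩)]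
  rw [hsplit, e1, e2, e3, hI1, hI3]
  -- final algebra
  have hsl : 0 < Real.sin (ψ - φl) := hsin1 φl ⟨hφl.le, le_refl _⟩
  have hsu : 0 < Real.sin (ψ - φu) := hsin2 φu ⟨le_refl _, hu2⟩
  have hs0 : 0 < Real.sin (ψ - 0) := hsin1 0 ⟨le_refl _, hφl.le⟩
  have hF2pi : F (2 * π) = F 0 := by
    simp only [hF]
    rw [Real.cos_sub_two_pi, Real.sin_sub_two_pi, sub_zero]
  rw [hlval φl hsl.ne', hlval φu hsu.ne', hF2pi]
  have hsin_sub : Real.sin (φl - φu)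
      = Real.sin (ψ - φu) * Real.cos (ψ - φl) - Real.cos (ψ - φu) * Real.sin (ψ - φl) := by
    rw [show φl - φu = (ψ - φu) - (ψ - φl) by ring, Real.sin_sub]
  simp only [hF, hK]
  rw [hsin_sub]
  field_simp
  ring
end
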